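/- For global states x, y of an information frame 𝔸, x ≪ y in the dcpo of global states ordered by inclusion if and only if there exist i ∈ A and V ∈ Con_i with {i} ∪ V ⊆ y and V ⊢_i x (i.e., V ⊢_i a for all a ∈ x). -/
import Mathlib


/-- The data `(Con, Ent)` on token set `A` forms an information frame.
`Con i` is the set of finite sets of tokens consistent with `i`, and
`Ent i X a` means `X ⊢ᵢ a`.  The accessibility relation is `i R j ↔ {i} ∈ Con j`. -/
structure IsInfoFrame {A : Type*} [DecidableEq A]
    (Con : A → Set (Finset A)) (Ent : A → Finset A → A → Prop) : Prop where
  self_con : ∀ i : A, ({i} : Finset A) ∈ Con i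
  con_down : ∀ (i : A) (X Y : Finset A), Y ⊆ X → X ∈ Con i → Y ∈ Con i
  sound : ∀ (i : A) (X Y : Finset A), X ∈ Con i → (∀ b ∈ Y, Ent i X b) → Y ∈ Con i
  weaken : ∀ (i : A) (X Y : Finset A) (a : A),
    X ∈ Con i → Y ∈ Con i → X ⊆ Y → Ent i X a → Ent i Y a
  cut : ∀ (i : A) (X Y : Finset A) (a : A),
    X ∈ Con i → (∀ b ∈ Y, Ent i X b) → Ent i Y a → Ent i X a
  con_transfer : ∀ i j : A, ({i} : Finset A) ∈ Con j → Con i ⊆ Con j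
  ent_transfer : ∀ (i j : A) (X : Finset A) (a : A),
    ({i} : Finset A) ∈ Con j → X ∈ Con i → Ent i X a → Ent j X a
  interp : ∀ (i : A) (X Y : Finset A), X ∈ Con i → (∀ b ∈ Y, Ent i X b) →
    ∃ (e : A) (Z : Finset A), Z ∈ Con e ∧ (∀ b ∈ insert e Z, Ent i X b) ∧
      (∀ b ∈ Y, Ent e Z b)

/-- Finite consistency of a subset `x` of tokens. -/
def FinConsistent {A : Type*} (Con : A → Set (Finset A)) (x : Set A) : Prop :=
  ∀ F : Finset A, ↑F ⊆ x → ∃ i ∈ x, F ∈ Con i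

/-- Closure of `x` under entailment. -/
def EntClosed {A : Type*} (Con : A → Set (Finset A))
    (Ent : A → Finset A → A → Prop) (x : Set A) : Prop :=
  ∀ i ∈ x, ∀ X : Finset A, ↑X ⊆ x → X ∈ Con i → ∀ a : A, Ent i X a → a ∈ x

/-- Completeness of `x`. -/
def EntComplete {A : Type*} (Con : A → Set (Finset A))
    (Ent : A → Finset A → A → Prop) (x : Set A) : Prop :=
  ∀ a ∈ x, ∃ i ∈ x, ∃ X : Finset A, ↑X ⊆ x ∧ X ∈ Con i ∧ Ent i X a

/-- A (global) state of an information frame. -/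
def IsState {A : Type*} (Con : A → Set (Finset A))
    (Ent : A → Finset A → A → Prop) (x : Set A) : Prop :=
  FinConsistent Con x ∧ EntClosed Con Ent x ∧ EntComplete Con Ent x

section Aux
variable {A : Type*} [DecidableEq A] {Con : A → Set (Finset A)}
  {Ent : A → Finset A → A → Prop}

/-- The state generated by a pair `(i, V)` with `V ∈ Con i`. -/
lemma gen_isState (hF : IsInfoFrame Con Ent) (i : A) (V : Finset A)
    (hV : V ∈ Con i) : IsState Con Ent {a | Ent i V a} := by
  refine ⟨?_, ?_, ?_⟩
  · intro F hFsub
    obtain ⟨e, Z, hZ, h1, h2⟩ := hF.interp i V F hV (fun b hb => hFsub hb)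
    exact ⟨e, h1 e (Finset.mem_insert_self _ _), hF.sound e Z F hZ h2⟩
  · intro j hj X hX hXCon a ha
    have hjCon : ({j} : Finset A) ∈ Con i :=
      hF.sound i V {j} hV (by simpa using hj)
    have hia : Ent i X a := hF.ent_transfer j i X a hjCon hXCon ha
    exact hF.cut i V X a hV (fun b hb => hX hb) hia
  · intro a ha
    obtain ⟨e, Z, hZ, h1, h2⟩ := hF.interp i V {a} hV
      (by intro b hb; rw [Finset.mem_singleton] at hb; subst hb; exact ha)
    exact ⟨e, h1 e (Finset.mem_insert_self _ _), Z,
      fun b hb => h1 b (Finset.mem_insert_of_mem hb), hZ,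
      h2 a (Finset.mem_singleton_self a)⟩

lemma gen_mono (hF : IsInfoFrame Con Ent) {i k : A} {V F : Finset A}
    (hV : V ∈ Con i) (hF1 : F ∈ Con k) (hi : i ∈ F) (hVF : V ⊆ F) :
    {a | Ent i V a} ⊆ {a | Ent k F a} := by
  intro a ha
  have hiCon : ({i} : Finset A) ∈ Con k :=
    hF.con_down k F {i} (by simpa using hi) hF1
  have hVk : V ∈ Con k := hF.con_down k F V hVF hF1
  have h1 : Ent k V a := hF.ent_transfer i k V a hiCon hV ha
  exact hF.weaken k V F a hVk hF1 hVF h1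

end Aux

theorem stmt12 {A : Type*} [DecidableEq A] (Con : A → Set (Finset A))
    (Ent : A → Finset A → A → Prop) (hF : IsInfoFrame Con Ent)
    (x y : Set A) (hx : IsState Con Ent x) (hy : IsState Con Ent y) :
    (∀ S : Set (Set A), S.Nonempty → DirectedOn (· ⊆ ·) S →
        (∀ z ∈ S, IsState Con Ent z) → y ⊆ ⋃₀ S → ∃ u ∈ S, x ⊆ u) ↔
      (∃ (i : A) (V : Finset A), V ∈ Con i ∧ insert i (↑V : Set A) ⊆ y ∧
        ∀ a ∈ x, Ent i V a) := by

  constructor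
  · -- way-below implies existence of a generating pair
    intro h
    set S : Set (Set A) :=
      { u | ∃ (i : A) (V : Finset A), V ∈ Con i ∧ insert i (↑V : Set A) ⊆ y ∧
        u = {a | Ent i V a} } with hS
    -- y is nonempty
    obtain ⟨i0, hi0, -⟩ := hx.1 ∅ (by simp)
    obtain ⟨j0, hj0y, -⟩ := hy.1 ∅ (by simp)
    -- S is nonempty
    obtain ⟨j1, hj1y, X1, hX1y, hX1c, hE1⟩ := hy.2.2 j0 hj0y
    have hSne : S.Nonempty := by
      refine ⟨{a | Ent j1 X1 a}, j1, X1, hX1c, ?_, rfl⟩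
      intro b hb
      rcases hb with hb | hb
      · subst hb; exact hj1y
      · exact hX1y hb
    have hSdir : DirectedOn (· ⊆ ·) S := by
      rintro u ⟨i, V, hV, hVy, rfl⟩ v ⟨j, W, hW, hWy, rfl⟩
      have hFy : ((insert i V ∪ insert j W : Finset A) : Set A) ⊆ y := by
        intro b hb
        simp only [Finset.coe_union, Finset.coe_insert, Set.mem_union] at hb
        rcases hb with hb | hb
        · exact hVy hb
        · exact hWy hb
      obtain ⟨k, hky, hkCon⟩ := hy.1 _ hFy
      refine ⟨{a | Ent k (insert i V ∪ insert j W) a}, ⟨k, _, hkCon, ?_, rfl⟩, ?_, ?_⟩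
      · intro b hb
        rcases hb with hb | hb
        · subst hb; exact hky
        · exact hFy hb
      · exact gen_mono hF hV hkCon (by simp) (by intro b hb; simp [hb])
      · exact gen_mono hF hW hkCon (by simp) (by intro b hb; simp [hb])
    have hSst : ∀ z ∈ S, IsState Con Ent z := by
      rintro z ⟨i, V, hV, hVy, rfl⟩
      exact gen_isState hF i V hV
    have hyS : y ⊆ ⋃₀ S := by
      intro a ha
      obtain ⟨i, hiy, X, hXy, hXc, hE⟩ := hy.2.2 a ha
      refine ⟨{b | Ent i X b}, ⟨i, X, hXc, ?_, rfl⟩, hE⟩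
      intro b hb
      rcases hb with hb | hb
      · subst hb; exact hiy
      · exact hXy hb
    obtain ⟨u, ⟨i, V, hV, hVy, rfl⟩, hxu⟩ := h S hSne hSdir hSst hyS
    exact ⟨i, V, hV, hVy, fun a ha => hxu ha⟩
  · rintro ⟨i, V, hV, hVy, hE⟩ S hSne hSdir hSst hyS
    have hsub : ((insert i V : Finset A) : Set A) ⊆ ⋃ u ∈ S, u := by
      rw [← Set.sUnion_eq_biUnion]
      intro b hb
      apply hyS
      apply hVy
      simpa using hb
    obtain ⟨u, huS, hu⟩ :=
      hSdir.exists_mem_subset_of_finset_subset_biUnion (f := id) hSne hsub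
    refine ⟨u, huS, fun a ha => ?_⟩
    have hiu : i ∈ u := hu (by simp)
    have hVu : (↑V : Set A) ⊆ u := fun b hb => hu (by simp [hb])
    exact (hSst u huS).2.1 i hiu V hVu hV a (hE a ha)
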